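/- Let ε > 0 and λ > 0 with √λ > ε, let z* be the unique root in (2√λ − ε, λ/ε) of r(w) = q_{λ,w}(r₂(w)) − q_{λ,w}(0), and let x^{(0)} ≥ √λ − ε. For z ≥ 0, let (x^{(k)})_{k≥0} be the sequence generated by the reweighted ℓ₁ iteration from x^{(0)}. Then: for every z ∈ [0, 2√λ − ε) ∪ (z*, ∞), the sequence converges and its limit belongs to prox_{λg}(z); and for every z ∈ [2√λ − ε, z*), the sequence converges to r₂(z), which does not belong to prox_{λg}(z) = {0}. -/

import Mathlib

open Real Filter

/-- The scalar log-sum penalty `g(w) = log(1 + |w|/ε)`. -/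
noncomputable def logpen (ε : ℝ) (w : ℝ) : ℝ := Real.log (1 + |w| / ε)

/-- The objective `q_{λ,z}(x) = (1/(2λ))(x − z)² + g(x)`. -/
noncomputable def qfun (lam ε z x : ℝ) : ℝ :=
  1 / (2 * lam) * (x - z) ^ 2 + logpen ε x

/-- The proximity operator of `λ g` at `z`: the set of global minimizers of `q_{λ,z}`. -/
def prox (lam ε z : ℝ) : Set ℝ := {x | ∀ y : ℝ, qfun lam ε z x ≤ qfun lam ε z y}

/-- `r₁(z) = (z − ε)/2 − √((z + ε)²/4 − λ)`. -/
noncomputable def r1 (lam ε z : ℝ) : ℝ :=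
  (z - ε) / 2 - Real.sqrt ((z + ε) ^ 2 / 4 - lam)

/-- `r₂(z) = (z − ε)/2 + √((z + ε)²/4 − λ)`. -/
noncomputable def r2 (lam ε z : ℝ) : ℝ :=
  (z - ε) / 2 + Real.sqrt ((z + ε) ^ 2 / 4 - lam)

/-- `r(z) = q_{λ,z}(r₂(z)) − q_{λ,z}(0)`. -/
noncomputable def rfun (lam ε z : ℝ) : ℝ :=
  qfun lam ε z (r2 lam ε z) - qfun lam ε z 0

/-- The iteratively reweighted ℓ₁ iteration for `prox_{λ g}(z)`. -/
def IterRW (lam ε z : ℝ) (x : ℕ → ℝ) : Prop :=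
  ∀ k : ℕ, x (k + 1) =
    if |z| ≤ lam / (ε + |x k|) then 0
    else Real.sign z * (|z| - lam / (ε + |x k|))


set_option linter.unusedSectionVars false
set_option linter.unusedVariables false
set_option linter.unnecessarySeqFocus false

noncomputable def Qf (lam ε z x : ℝ) : ℝ :=
  1 / (2 * lam) * (x - z) ^ 2 + Real.log (1 + x / ε)

lemma qfun_eq_Qf {lam ε z x : ℝ} (hx : 0 ≤ x) : qfun lam ε z x = Qf lam ε z x := by
  simp [qfun, Qf, logpen, abs_of_nonneg hx]

lemma one_add_div_pos {ε x : ℝ} (hε : 0 < ε) (hx : -ε < x) : 0 < 1 + x / ε := by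
  have : (-1 : ℝ) < x / ε := by rw [lt_div_iff₀ hε]; linarith
  linarith

lemma hasDerivAt_Qf {lam ε z : ℝ} (x : ℝ) (hε : 0 < ε) (hlam : 0 < lam) (hx : -ε < x) :
    HasDerivAt (Qf lam ε z) ((x - z) / lam + 1 / (ε + x)) x := by
  have hεx : 0 < ε + x := by linarith
  have h1 : HasDerivAt (fun y : ℝ => (y - z) ^ 2) (2 * (x - z)) x := by
    simpa using ((hasDerivAt_id x).sub_const z).fun_pow 2
  have h1' := h1.const_mul (1 / (2 * lam))
  have h2 : HasDerivAt (fun y : ℝ => 1 + y / ε) (1 / ε) x := by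
    simpa using ((hasDerivAt_id x).div_const ε).const_add 1
  have hne : 1 + x / ε ≠ 0 := ne_of_gt (one_add_div_pos hε hx)
  have h2' := h2.log hne
  have := h1'.add h2'
  convert this using 1
  · rfl
  · rfl
  · rfl
  field_simp
  try ring

lemma deriv_Qf {lam ε z : ℝ} (x : ℝ) (hε : 0 < ε) (hlam : 0 < lam) (hx : -ε < x) :
    deriv (Qf lam ε z) x = ((x - z) * (ε + x) + lam) / (lam * (ε + x)) := by
  rw [(hasDerivAt_Qf x hε hlam hx).deriv]
  have h1 : ε + x ≠ 0 := by linarith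
  field_simp

lemma Qf_contOn {lam ε z a b : ℝ} (hε : 0 < ε) (hlam : 0 < lam) (ha : 0 ≤ a) :
    ContinuousOn (Qf lam ε z) (Set.Icc a b) := by
  intro t ht
  exact ((hasDerivAt_Qf t hε hlam (by have := ht.1; linarith)).continuousAt).continuousWithinAt

lemma Qf_strictMono {lam ε z a b : ℝ} (hε : 0 < ε) (hlam : 0 < lam) (ha : 0 ≤ a)
    (hab : a < b) (hp : ∀ t ∈ Set.Ioo a b, 0 < (t - z) * (ε + t) + lam) :
    Qf lam ε z a < Qf lam ε z b := by
  have := strictMonoOn_of_deriv_pos (convex_Icc a b) (Qf_contOn hε hlam ha (z := z) (b := b)) ?_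
  · exact this (Set.left_mem_Icc.2 hab.le) (Set.right_mem_Icc.2 hab.le) hab
  · intro t ht
    rw [interior_Icc] at ht
    have hta : -ε < t := by have := ht.1; linarith
    rw [deriv_Qf t hε hlam hta]
    exact div_pos (hp t ht) (by nlinarith [ht.1])

lemma Qf_strictAnti {lam ε z a b : ℝ} (hε : 0 < ε) (hlam : 0 < lam) (ha : 0 ≤ a)
    (hab : a < b) (hp : ∀ t ∈ Set.Ioo a b, (t - z) * (ε + t) + lam < 0) :
    Qf lam ε z b < Qf lam ε z a := by
  have := strictAntiOn_of_deriv_neg (convex_Icc a b) (Qf_contOn hε hlam ha (z := z) (b := b)) ?_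
  · exact this (Set.left_mem_Icc.2 hab.le) (Set.right_mem_Icc.2 hab.le) hab
  · intro t ht
    rw [interior_Icc] at ht
    have hta : -ε < t := by have := ht.1; linarith
    rw [deriv_Qf t hε hlam hta]
    exact div_neg_of_neg_of_pos (hp t ht) (by nlinarith [ht.1])

section roots
variable {lam ε z : ℝ} (hε : 0 < ε) (hlam : 0 < lam) (hz : 2 * Real.sqrt lam - ε ≤ z)
include hε hlam hz

omit hε in
lemma sq_s : (Real.sqrt ((z + ε) ^ 2 / 4 - lam)) ^ 2 = (z + ε) ^ 2 / 4 - lam := by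
  apply Real.sq_sqrt
  nlinarith [Real.sq_sqrt hlam.le, Real.sqrt_nonneg lam]

omit hε in
lemma pfact (t : ℝ) : (t - z) * (ε + t) + lam = (t - r1 lam ε z) * (t - r2 lam ε z) := by
  have h2 := sq_s hlam hz
  unfold r1 r2
  linear_combination h2

omit hε in
lemma r1_le_r2 : r1 lam ε z ≤ r2 lam ε z := by
  unfold r1 r2
  have := Real.sqrt_nonneg ((z + ε) ^ 2 / 4 - lam)
  linarith

omit hε in
lemma r2_ge : Real.sqrt lam - ε ≤ r2 lam ε z := by
  have hs := Real.sqrt_nonneg ((z + ε) ^ 2 / 4 - lam)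
  unfold r2
  nlinarith [Real.sqrt_nonneg lam]

omit hε in
lemma r1_le : r1 lam ε z ≤ Real.sqrt lam - ε := by
  have hsl := Real.sq_sqrt hlam.le
  have hslp : 0 < Real.sqrt lam := Real.sqrt_pos.2 hlam
  have hp := pfact hlam hz (Real.sqrt lam - ε)
  have hpe : (Real.sqrt lam - ε - r1 lam ε z) * (Real.sqrt lam - ε - r2 lam ε z)
      = Real.sqrt lam * (2 * Real.sqrt lam - ε - z) := by
    rw [← hp]; linear_combination -hsl
  have hle : (Real.sqrt lam - ε - r1 lam ε z) * (Real.sqrt lam - ε - r2 lam ε z) ≤ 0 := by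
    rw [hpe]; nlinarith
  have h2 := r2_ge hlam hz
  have h12 := r1_le_r2 hlam hz
  nlinarith

end roots

lemma r2_mono {lam ε z1 z2 : ℝ} (hlam : 0 < lam) (hz1 : 2 * Real.sqrt lam - ε ≤ z1)
    (h12 : z1 ≤ z2) : r2 lam ε z1 ≤ r2 lam ε z2 := by
  unfold r2
  have hs : Real.sqrt ((z1 + ε) ^ 2 / 4 - lam) ≤ Real.sqrt ((z2 + ε) ^ 2 / 4 - lam) := by
    apply Real.sqrt_le_sqrt
    nlinarith [Real.sqrt_nonneg lam]
  linarith

lemma rfun_anti {lam ε z1 z2 : ℝ} (hε : 0 < ε) (hlam : 0 < lam) (h : ε < Real.sqrt lam)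
    (hz1 : 2 * Real.sqrt lam - ε ≤ z1) (h12 : z1 < z2) :
    rfun lam ε z2 < rfun lam ε z1 := by
  have hz2 : 2 * Real.sqrt lam - ε ≤ z2 := by linarith
  set w := r2 lam ε z1 with hw
  have hw0 : 0 < w := lt_of_lt_of_le (by linarith) (r2_ge hlam hz1)
  have hww : w ≤ r2 lam ε z2 := r2_mono hlam hz1 h12.le
  have step1 : qfun lam ε z2 (r2 lam ε z2) ≤ qfun lam ε z2 w := by
    rcases eq_or_lt_of_le hww with heq | hlt
    · rw [heq]
    · rw [qfun_eq_Qf hw0.le, qfun_eq_Qf (le_trans hw0.le hww)]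
      apply le_of_lt
      apply Qf_strictAnti hε hlam hw0.le hlt
      intro t ht
      rw [pfact hlam hz2 t]
      apply mul_neg_of_pos_of_neg
      · have := r1_le hlam hz2
        have := r2_ge hlam hz1
        have := ht.1
        linarith
      · linarith [ht.2]
  have step2 : qfun lam ε z2 w - qfun lam ε z2 0 < qfun lam ε z1 w - qfun lam ε z1 0 := by
    simp only [qfun]
    have key : (w - z2) ^ 2 - (0 - z2) ^ 2 < (w - z1) ^ 2 - (0 - z1) ^ 2 := by nlinarith
    have hpos : (0:ℝ) < 1 / (2 * lam) := by positivity
    nlinarith [mul_lt_mul_of_pos_left key hpos]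
  calc rfun lam ε z2 = qfun lam ε z2 (r2 lam ε z2) - qfun lam ε z2 0 := rfl
    _ ≤ qfun lam ε z2 w - qfun lam ε z2 0 := by linarith
    _ < qfun lam ε z1 w - qfun lam ε z1 0 := step2
    _ = rfun lam ε z1 := rfl

lemma qfun_abs_le {lam ε z y : ℝ} (hlam : 0 < lam) (hz : 0 ≤ z) :
    qfun lam ε z |y| ≤ qfun lam ε z y := by
  simp only [qfun, logpen, abs_abs]
  have hpos : (0:ℝ) < 1 / (2 * lam) := by positivity
  have key : (|y| - z) ^ 2 ≤ (y - z) ^ 2 := by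
    rcases abs_cases y with ⟨h1, _⟩ | ⟨h1, h2⟩
    · rw [h1]
    · rw [h1]; nlinarith
  nlinarith [mul_le_mul_of_nonneg_left key hpos.le]

lemma qfun_abs_lt {lam ε z y : ℝ} (hlam : 0 < lam) (hz : 0 < z) (hy : y < 0) :
    qfun lam ε z |y| < qfun lam ε z y := by
  simp only [qfun, logpen, abs_abs]
  have hpos : (0:ℝ) < 1 / (2 * lam) := by positivity
  have key : (|y| - z) ^ 2 < (y - z) ^ 2 := by
    rw [abs_of_neg hy]; nlinarith
  nlinarith [mul_lt_mul_of_pos_left key hpos]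

/-- Structure of `qfun` on `[0,∞)` when the quadratic has roots. -/
lemma qfun_cases {lam ε z y : ℝ} (hε : 0 < ε) (hlam : 0 < lam)
    (h : ε < Real.sqrt lam)
    (hz : 2 * Real.sqrt lam - ε ≤ z) (hy : 0 ≤ y) :
    y = 0 ∨ qfun lam ε z 0 < qfun lam ε z y ∨
      qfun lam ε z (r2 lam ε z) ≤ qfun lam ε z y := by
  have hr12 := r1_le_r2 hlam (z := z) hz
  have hr2 : 0 ≤ r2 lam ε z := by
    have := r2_ge hlam (z := z) hz
    linarith
  rcases lt_trichotomy y (r2 lam ε z) with hy2 | hy2 | hy2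
  · rcases lt_or_ge y (r1 lam ε z) with hy1 | hy1
    · -- 0 ≤ y < r1 : increasing on [0, y]
      rcases eq_or_lt_of_le hy with h0 | h0
      · exact Or.inl h0.symm
      · refine Or.inr (Or.inl ?_)
        rw [qfun_eq_Qf le_rfl, qfun_eq_Qf hy]
        apply Qf_strictMono hε hlam le_rfl h0
        intro t ht
        rw [pfact hlam hz t]
        exact mul_pos_of_neg_of_neg (by linarith [ht.2]) (by linarith [ht.2])
    · -- r1 ≤ y < r2 : decreasing on [y, r2]
      refine Or.inr (Or.inr ?_)
      rw [qfun_eq_Qf hy, qfun_eq_Qf hr2]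
      apply le_of_lt
      apply Qf_strictAnti hε hlam hy hy2
      intro t ht
      rw [pfact hlam hz t]
      exact mul_neg_of_pos_of_neg (by linarith [ht.1]) (by linarith [ht.2])
  · exact Or.inr (Or.inr (le_of_eq (by rw [hy2])))
  · -- r2 < y : increasing on [r2, y]
    refine Or.inr (Or.inr ?_)
    rw [qfun_eq_Qf hy, qfun_eq_Qf hr2]
    apply le_of_lt
    apply Qf_strictMono hε hlam hr2 hy2
    intro t ht
    rw [pfact hlam hz t]
    exact mul_pos (by linarith [ht.1]) (by linarith [ht.1])

/-- Case `0 ≤ z < 2√λ − ε`: `0` is the global minimizer. -/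
lemma zero_mem_prox_small {lam ε z : ℝ} (hε : 0 < ε) (hlam : 0 < lam)
    (hz0 : 0 ≤ z) (hz : z < 2 * Real.sqrt lam - ε) : (0:ℝ) ∈ prox lam ε z := by
  intro y
  have h1 : qfun lam ε z |y| ≤ qfun lam ε z y := qfun_abs_le hlam hz0
  have h2 : qfun lam ε z 0 ≤ qfun lam ε z |y| := by
    rcases eq_or_lt_of_le (abs_nonneg y) with h0 | h0
    · rw [← h0]
    · rw [qfun_eq_Qf le_rfl, qfun_eq_Qf (abs_nonneg y)]
      apply le_of_lt
      apply Qf_strictMono hε hlam le_rfl h0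
      intro t ht
      have hsl := Real.sq_sqrt hlam.le
      have hsn := Real.sqrt_nonneg lam
      nlinarith [sq_nonneg (2 * t + ε - z), ht.1]
  linarith

/-- Case `rfun z ≤ 0`, `2√λ−ε ≤ z`: `r₂ z` is a global minimizer. -/
lemma r2_mem_prox {lam ε z : ℝ} (hε : 0 < ε) (hlam : 0 < lam) (h : ε < Real.sqrt lam)
    (hz : 2 * Real.sqrt lam - ε ≤ z) (hr : rfun lam ε z ≤ 0) :
    r2 lam ε z ∈ prox lam ε z := by
  intro y
  have hz0 : 0 < z := by
    have : 0 < Real.sqrt lam := Real.sqrt_pos.2 hlam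
    linarith
  have h1 : qfun lam ε z |y| ≤ qfun lam ε z y := qfun_abs_le hlam hz0.le
  have hrr : qfun lam ε z (r2 lam ε z) ≤ qfun lam ε z 0 := by
    have : rfun lam ε z = qfun lam ε z (r2 lam ε z) - qfun lam ε z 0 := rfl
    linarith
  rcases qfun_cases hε hlam h hz (abs_nonneg y) with h0 | hlt | hle
  · rw [h0] at h1; linarith
  · linarith
  · linarith

/-- Case `rfun z > 0`, `2√λ−ε ≤ z`: `prox = {0}` and `r₂ z ∉ prox`. -/
lemma prox_eq_zero {lam ε z : ℝ} (hε : 0 < ε) (hlam : 0 < lam) (h : ε < Real.sqrt lam)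
    (hz : 2 * Real.sqrt lam - ε ≤ z) (hr : 0 < rfun lam ε z) :
    prox lam ε z = {0} ∧ r2 lam ε z ∉ prox lam ε z := by
  have hz0 : 0 < z := by
    have : 0 < Real.sqrt lam := Real.sqrt_pos.2 hlam
    linarith
  have hrr : qfun lam ε z 0 < qfun lam ε z (r2 lam ε z) := by
    have : rfun lam ε z = qfun lam ε z (r2 lam ε z) - qfun lam ε z 0 := rfl
    linarith
  have h0mem : (0:ℝ) ∈ prox lam ε z := by
    intro y
    have h1 : qfun lam ε z |y| ≤ qfun lam ε z y := qfun_abs_le hlam hz0.le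
    rcases qfun_cases hε hlam h hz (abs_nonneg y) with h0 | hlt | hle
    · rw [← h0]; exact h1
    · linarith
    · linarith
  refine ⟨?_, ?_⟩
  · apply Set.eq_singleton_iff_unique_mem.2 ⟨h0mem, ?_⟩
    intro w hw
    by_contra hne
    rcases lt_trichotomy w 0 with hneg | h0 | hpos
    · have := qfun_abs_lt (ε := ε) (z := z) hlam hz0 hneg
      have := hw |w|
      linarith
    · exact hne h0
    · rcases qfun_cases hε hlam h hz hpos.le with h0 | hlt | hle
      · exact hne h0
      · have := hw 0; linarith
      · have := hw 0; linarith
  · intro hmem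
    have := hmem 0
    linarith

section conv
variable {lam ε z : ℝ}

lemma iter_step {x : ℕ → ℝ} (hε : 0 < ε) (hlam : 0 < lam) (h : ε < Real.sqrt lam)
    (hz : 2 * Real.sqrt lam - ε ≤ z) (hiter : IterRW lam ε z x) (k : ℕ)
    (hxk : Real.sqrt lam - ε ≤ x k) :
    x (k + 1) = z - lam / (ε + x k) := by
  have hsl : 0 < Real.sqrt lam := Real.sqrt_pos.2 hlam
  have hz0 : 0 < z := by linarith
  have hxk0 : 0 ≤ x k := by linarith
  have hεx : Real.sqrt lam ≤ ε + x k := by linarith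
  have hlt : lam / (ε + x k) < z := by
    have h1 : lam / (ε + x k) ≤ lam / Real.sqrt lam := by gcongr
    rw [Real.div_sqrt] at h1
    linarith
  rw [hiter k, abs_of_nonneg hxk0, abs_of_nonneg hz0.le, if_neg (not_le.2 hlt),
    Real.sign_of_pos hz0, one_mul]

lemma rho_fix (hε : 0 < ε) (hlam : 0 < lam) (h : ε < Real.sqrt lam)
    (hz : 2 * Real.sqrt lam - ε ≤ z) :
    z - lam / (ε + r2 lam ε z) = r2 lam ε z := by
  have hsl : 0 < Real.sqrt lam := Real.sqrt_pos.2 hlam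
  have hpos : 0 < ε + r2 lam ε z := by have := r2_ge hlam hz; linarith
  have h0 : (r2 lam ε z - z) * (ε + r2 lam ε z) + lam = 0 := by
    rw [pfact hlam hz]; ring
  field_simp
  linear_combination -h0

lemma f_ge_self (hε : 0 < ε) (hlam : 0 < lam) (h : ε < Real.sqrt lam)
    (hz : 2 * Real.sqrt lam - ε ≤ z) {w : ℝ} (hw1 : Real.sqrt lam - ε ≤ w)
    (hw2 : w ≤ r2 lam ε z) : w ≤ z - lam / (ε + w) := by
  have hsl : 0 < Real.sqrt lam := Real.sqrt_pos.2 hlam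
  have hεw : 0 < ε + w := by linarith
  have hp : (w - z) * (ε + w) + lam ≤ 0 := by
    rw [pfact hlam hz]
    have := r1_le hlam (z := z) hz
    exact mul_nonpos_of_nonneg_of_nonpos (by linarith) (by linarith)
  rw [← sub_nonneg]
  have heq : z - lam / (ε + w) - w = (-((w - z) * (ε + w) + lam)) / (ε + w) := by
    field_simp; ring
  rw [heq]
  exact div_nonneg (by linarith) hεw.le

lemma f_le_self (hε : 0 < ε) (hlam : 0 < lam) (h : ε < Real.sqrt lam)
    (hz : 2 * Real.sqrt lam - ε ≤ z) {w : ℝ} (hw : r2 lam ε z ≤ w) :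
    z - lam / (ε + w) ≤ w := by
  have hsl : 0 < Real.sqrt lam := Real.sqrt_pos.2 hlam
  have hεw : 0 < ε + w := by have := r2_ge hlam (z := z) hz; linarith
  have hp : 0 ≤ (w - z) * (ε + w) + lam := by
    rw [pfact hlam hz]
    have := r1_le_r2 hlam (z := z) hz
    exact mul_nonneg (by linarith) (by linarith)
  rw [← sub_nonneg]
  have heq : w - (z - lam / (ε + w)) = ((w - z) * (ε + w) + lam) / (ε + w) := by
    field_simp; ring
  rw [heq]
  exact div_nonneg hp hεw.le

lemma fixed_eq_rho (hε : 0 < ε) (hlam : 0 < lam) (h : ε < Real.sqrt lam)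
    (hz : 2 * Real.sqrt lam - ε ≤ z) {L : ℝ} (hL1 : Real.sqrt lam - ε ≤ L)
    (hfix : L = z - lam / (ε + L)) : L = r2 lam ε z := by
  have hsl : 0 < Real.sqrt lam := Real.sqrt_pos.2 hlam
  have hεL : 0 < ε + L := by linarith
  have hp0 : (L - z) * (ε + L) + lam = 0 := by
    have hd : lam / (ε + L) = z - L := by linarith
    field_simp at hd
    linarith [hd]
  have hpf : (L - r1 lam ε z) * (L - r2 lam ε z) = 0 := by
    rw [← pfact hlam hz]; exact hp0
  rcases mul_eq_zero.1 hpf with h1 | h2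
  · have hLr1 : L = r1 lam ε z := sub_eq_zero.1 h1
    have hr1le := r1_le hlam (z := z) hz
    have hLe : L = Real.sqrt lam - ε := le_antisymm (by linarith) hL1
    have hsq := Real.sq_sqrt hlam.le
    have hpe : (Real.sqrt lam - ε - z) * (ε + (Real.sqrt lam - ε)) + lam
        = Real.sqrt lam * (2 * Real.sqrt lam - ε - z) := by
      linear_combination -hsq
    have h0 : (Real.sqrt lam - ε - z) * (ε + (Real.sqrt lam - ε)) + lam = 0 := by
      rw [← hLe]; exact hp0
    rw [hpe] at h0
    have hze : z = 2 * Real.sqrt lam - ε := by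
      rcases mul_eq_zero.1 h0 with h' | h'
      · exact absurd h' (ne_of_gt hsl)
      · linarith
    have harg : (z + ε) ^ 2 / 4 - lam = 0 := by
      rw [hze]; linear_combination hsq
    have hr2e : r2 lam ε z = (z - ε) / 2 := by
      unfold r2; rw [harg, Real.sqrt_zero]; ring
    rw [hr2e, hze, hLe]; ring
  · exact sub_eq_zero.1 h2

lemma tendsto_r2 (hε : 0 < ε) (hlam : 0 < lam) (h : ε < Real.sqrt lam)
    (hz : 2 * Real.sqrt lam - ε ≤ z) (x : ℕ → ℝ)
    (hx0 : Real.sqrt lam - ε ≤ x 0) (hiter : IterRW lam ε z x) :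
    Tendsto x atTop (nhds (r2 lam ε z)) := by
  have hsl : 0 < Real.sqrt lam := Real.sqrt_pos.2 hlam
  have hρge := r2_ge hlam (z := z) hz
  rcases le_total (x 0) (r2 lam ε z) with hcase | hcase
  · -- increasing case
    have hinv : ∀ k, Real.sqrt lam - ε ≤ x k ∧ x k ≤ r2 lam ε z := by
      intro k
      induction k with
      | zero => exact ⟨hx0, hcase⟩
      | succ n ih =>
        rw [iter_step hε hlam h hz hiter n ih.1]
        constructor
        · exact le_trans ih.1 (f_ge_self hε hlam h hz ih.1 ih.2)
        · have hmono : lam / (ε + r2 lam ε z) ≤ lam / (ε + x n) := by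
            gcongr <;> linarith [ih.1, ih.2]
          have := rho_fix hε hlam h hz
          linarith
    have hmono : Monotone x := by
      apply monotone_nat_of_le_succ
      intro k
      rw [iter_step hε hlam h hz hiter k (hinv k).1]
      exact f_ge_self hε hlam h hz (hinv k).1 (hinv k).2
    have hbdd : BddAbove (Set.range x) := ⟨r2 lam ε z, by rintro _ ⟨k, rfl⟩; exact (hinv k).2⟩
    have ht := tendsto_atTop_ciSup hmono hbdd
    set L := ⨆ k, x k with hLdef
    have hL1 : Real.sqrt lam - ε ≤ L := le_trans (hinv 0).1 (le_ciSup hbdd 0)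
    have hne : ε + L ≠ 0 := ne_of_gt (by linarith)
    have hfix : L = z - lam / (ε + L) := by
      have h1 : Tendsto (fun k => x (k + 1)) atTop (nhds L) :=
        ht.comp (tendsto_add_atTop_nat 1)
      have h2 : Tendsto (fun k => z - lam / (ε + x k)) atTop
          (nhds (z - lam / (ε + L))) := by
        apply Tendsto.sub tendsto_const_nhds
        exact Tendsto.div tendsto_const_nhds (tendsto_const_nhds.add ht) hne
      have heq : (fun k => x (k + 1)) = fun k => z - lam / (ε + x k) :=
        funext fun k => iter_step hε hlam h hz hiter k (hinv k).1
      rw [heq] at h1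
      exact tendsto_nhds_unique h1 h2
    have := fixed_eq_rho hε hlam h hz hL1 hfix
    rwa [this] at ht
  · -- decreasing case
    have hinv : ∀ k, r2 lam ε z ≤ x k := by
      intro k
      induction k with
      | zero => exact hcase
      | succ n ih =>
        rw [iter_step hε hlam h hz hiter n (le_trans hρge ih)]
        have hmono : lam / (ε + x n) ≤ lam / (ε + r2 lam ε z) := by
          gcongr <;> linarith [ih, hρge]
        have := rho_fix hε hlam h hz
        linarith
    have hanti : Antitone x := by
      apply antitone_nat_of_succ_le
      intro k
      rw [iter_step hε hlam h hz hiter k (le_trans hρge (hinv k))]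
      exact f_le_self hε hlam h hz (hinv k)
    have hbdd : BddBelow (Set.range x) := ⟨r2 lam ε z, by rintro _ ⟨k, rfl⟩; exact hinv k⟩
    have ht := tendsto_atTop_ciInf hanti hbdd
    set L := ⨅ k, x k with hLdef
    have hL1 : r2 lam ε z ≤ L := le_ciInf hinv
    have hL1' : Real.sqrt lam - ε ≤ L := le_trans hρge hL1
    have hne : ε + L ≠ 0 := ne_of_gt (by linarith)
    have hfix : L = z - lam / (ε + L) := by
      have h1 : Tendsto (fun k => x (k + 1)) atTop (nhds L) :=
        ht.comp (tendsto_add_atTop_nat 1)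
      have h2 : Tendsto (fun k => z - lam / (ε + x k)) atTop
          (nhds (z - lam / (ε + L))) := by
        apply Tendsto.sub tendsto_const_nhds
        exact Tendsto.div tendsto_const_nhds (tendsto_const_nhds.add ht) hne
      have heq : (fun k => x (k + 1)) = fun k => z - lam / (ε + x k) :=
        funext fun k => iter_step hε hlam h hz hiter k (le_trans hρge (hinv k))
      rw [heq] at h1
      exact tendsto_nhds_unique h1 h2
    have := fixed_eq_rho hε hlam h hz hL1' hfix
    rwa [this] at ht

lemma tendsto_zero (hε : 0 < ε) (hlam : 0 < lam) (h : ε < Real.sqrt lam)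
    (hz0 : 0 ≤ z) (hz : z < 2 * Real.sqrt lam - ε) (x : ℕ → ℝ)
    (hx0 : Real.sqrt lam - ε ≤ x 0) (hiter : IterRW lam ε z x) :
    Tendsto x atTop (nhds 0) := by
  have hsl : 0 < Real.sqrt lam := Real.sqrt_pos.2 hlam
  have hsq := Real.sq_sqrt hlam.le
  have hppos : ∀ w : ℝ, 0 ≤ w → 0 < (w - z) * (ε + w) + lam := by
    intro w hw
    nlinarith [sq_nonneg (2 * w + ε - z)]
  have hinv : ∀ k, 0 ≤ x k := by
    intro k
    induction k with
    | zero => linarith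
    | succ n ih =>
      rw [hiter n]
      split_ifs with hc
      · exact le_rfl
      · push_neg at hc
        have hd : 0 < lam / (ε + |x n|) := by positivity
        have hzpos : 0 < z := by rw [abs_of_nonneg hz0] at hc; linarith
        rw [Real.sign_of_pos hzpos, one_mul, abs_of_nonneg hz0]
        rw [abs_of_nonneg hz0] at hc
        linarith
  have hmax : ∀ k, x (k + 1) = max 0 (z - lam / (ε + x k)) := by
    intro k
    rw [hiter k, abs_of_nonneg (hinv k), abs_of_nonneg hz0]
    split_ifs with hc
    · rw [max_eq_left (by linarith)]
    · push_neg at hc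
      have hd : 0 < lam / (ε + x k) := by
        have := hinv k; positivity
      have hzpos : 0 < z := by linarith
      rw [Real.sign_of_pos hzpos, one_mul, max_eq_right (by linarith)]
  have hanti : Antitone x := by
    apply antitone_nat_of_succ_le
    intro k
    rw [hmax k]
    have hεx : 0 < ε + x k := by have := hinv k; linarith
    have hle : z - lam / (ε + x k) ≤ x k := by
      rw [← sub_nonneg]
      have heq : x k - (z - lam / (ε + x k))
          = ((x k - z) * (ε + x k) + lam) / (ε + x k) := by
        field_simp; ring
      rw [heq]
      exact div_nonneg (hppos _ (hinv k)).le hεx.le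
    exact max_le (hinv k) hle
  have hbdd : BddBelow (Set.range x) := ⟨0, by rintro _ ⟨k, rfl⟩; exact hinv k⟩
  have ht := tendsto_atTop_ciInf hanti hbdd
  set L := ⨅ k, x k with hLdef
  have hL0 : 0 ≤ L := le_ciInf hinv
  have hne : ε + L ≠ 0 := ne_of_gt (by linarith)
  have hfix : L = max 0 (z - lam / (ε + L)) := by
    have h1 : Tendsto (fun k => x (k + 1)) atTop (nhds L) :=
      ht.comp (tendsto_add_atTop_nat 1)
    have h2 : Tendsto (fun k => max 0 (z - lam / (ε + x k))) atTop
        (nhds (max 0 (z - lam / (ε + L)))) := by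
      apply Tendsto.max tendsto_const_nhds
      apply Tendsto.sub tendsto_const_nhds
      exact Tendsto.div tendsto_const_nhds (tendsto_const_nhds.add ht) hne
    have heq : (fun k => x (k + 1)) = fun k => max 0 (z - lam / (ε + x k)) :=
      funext fun k => hmax k
    rw [heq] at h1
    exact tendsto_nhds_unique h1 h2
  have hL : L = 0 := by
    rcases eq_or_lt_of_le hL0 with h0 | h0
    · exact h0.symm
    · exfalso
      rcases max_choice 0 (z - lam / (ε + L)) with hm | hm
      · rw [hm] at hfix; linarith
      · rw [hm] at hfix
        have hεL : 0 < ε + L := by linarith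
        have hp : (L - z) * (ε + L) + lam = 0 := by
          have hd : lam / (ε + L) = z - L := by linarith
          field_simp at hd
          linarith [hd]
        linarith [hppos L hL0]
  rwa [hL] at ht

end conv

/-- for `√λ > ε` and `x⁽⁰⁾ ≥ √λ − ε`, the reweighted ℓ₁ iteration
is accurate off `[2√λ − ε, z*)` and fails on `[2√λ − ε, z*)`, where it converges
to `r₂(z)` even though `prox_{λg}(z) = {0}`. -/
theorem iterRW_accuracy_sqrt_gt (ε lam zs : ℝ) (hε : 0 < ε) (hlam : 0 < lam)
    (h : ε < Real.sqrt lam)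
    (hzs : zs ∈ Set.Ioo (2 * Real.sqrt lam - ε) (lam / ε))
    (hroot : rfun lam ε zs = 0)
    (x0 : ℝ) (hx0 : Real.sqrt lam - ε ≤ x0) :
    ∀ z : ℝ, 0 ≤ z → ∀ x : ℕ → ℝ, x 0 = x0 → IterRW lam ε z x →
      ((z < 2 * Real.sqrt lam - ε ∨ zs < z →
        ∃ L : ℝ, Filter.Tendsto x Filter.atTop (nhds L) ∧ L ∈ prox lam ε z) ∧
      (2 * Real.sqrt lam - ε ≤ z → z < zs →
        Filter.Tendsto x Filter.atTop (nhds (r2 lam ε z)) ∧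
        prox lam ε z = {0} ∧ r2 lam ε z ∉ prox lam ε z)) := by
  intro z hz0 x hx0eq hiter
  have hx00 : Real.sqrt lam - ε ≤ x 0 := by rw [hx0eq]; exact hx0
  constructor
  · intro hcase
    rcases hcase with hlt | hgt
    · exact ⟨0, tendsto_zero hε hlam h hz0 hlt x hx00 hiter,
        zero_mem_prox_small hε hlam hz0 hlt⟩
    · have hz2 : 2 * Real.sqrt lam - ε ≤ z := le_trans hzs.1.le hgt.le
      refine ⟨r2 lam ε z, tendsto_r2 hε hlam h hz2 x hx00 hiter, ?_⟩
      apply r2_mem_prox hε hlam h hz2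
      have := rfun_anti hε hlam h (le_of_lt hzs.1) hgt
      rw [hroot] at this; linarith
  · intro hge hlt
    have hrpos : 0 < rfun lam ε z := by
      have := rfun_anti hε hlam h hge hlt
      rw [hroot] at this; linarith
    obtain ⟨hp1, hp2⟩ := prox_eq_zero hε hlam h hge hrpos
    exact ⟨tendsto_r2 hε hlam h hge x hx00 hiter, hp1, hp2⟩
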